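/- Fix a finite set 𝔯 of resources. Let (A, ρ) be a resource alphabet with a distinguished letter # ∈ A such that ρ(#) = 𝔯 and ρ(a) ≠ ∅ for every a ∈ A. If u₁, …, u_m and v₁, …, v_n are elements of the submonoid of M(A,ρ) generated by A ∖ {#} and # u₁ # u₂ # ⋯ u_m # = # v₁ # v₂ # ⋯ v_n # holds in M(A, ρ), then m = n and u_i = v_i in M(A, ρ) for all 1 ≤ i ≤ m. -/

import Mathlib

open scoped Classical

universe u

/-- The partial-commutation relation on words: `ab = ba` whenever `ρ a ∩ ρ b = ∅`. -/
def traceRel {R : Type u} (Γ : Type u) (ρ : Γ → Set R) :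
    FreeMonoid Γ → FreeMonoid Γ → Prop := fun u v =>
  ∃ a b : Γ, ρ a ∩ ρ b = ∅ ∧ u = FreeMonoid.of a * FreeMonoid.of b ∧
    v = FreeMonoid.of b * FreeMonoid.of a

/-- The congruence on the free monoid generated by partial commutation. -/
def traceCon {R : Type u} (Γ : Type u) (ρ : Γ → Set R) : Con (FreeMonoid Γ) :=
  conGen (traceRel Γ ρ)

/-- The trace monoid `M(Γ, ρ)`. -/
abbrev Trace {R : Type u} (Γ : Type u) (ρ : Γ → Set R) : Type u :=
  (traceCon Γ ρ).Quotient

/-- Canonical projection from words to traces. -/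
def traceMk {R Γ : Type u} (ρ : Γ → Set R) : FreeMonoid Γ →* Trace Γ ρ :=
  (traceCon Γ ρ).mk'

/-- The trace of a single letter. -/
def traceOf {R Γ : Type u} (ρ : Γ → Set R) (a : Γ) : Trace Γ ρ :=
  traceMk ρ (FreeMonoid.of a)

/-- Word-level involution: reverse the word and apply `bar` letterwise. -/
def wordStar {Γ : Type u} (bar : Γ → Γ) (u : FreeMonoid Γ) : FreeMonoid Γ :=
  FreeMonoid.ofList (((FreeMonoid.toList u).map bar).reverse)

/-! ### Auxiliary: the segmented monoid -/

/-- Segmented monoid over a monoid `T`. -/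
def SegM (T : Type u) : Type u := Sum T (T × List T × T)

namespace SegM

variable {T : Type u} [Monoid T]

def mul' : SegM T → SegM T → SegM T
  | .inl s, .inl t => .inl (s * t)
  | .inl s, .inr (l, M, r) => .inr (s * l, M, r)
  | .inr (l, M, r), .inl t => .inr (l, M, r * t)
  | .inr (l, M, r), .inr (l', M', r') => .inr (l, M ++ (r * l') :: M', r')

instance : Mul (SegM T) := ⟨mul'⟩
instance : One (SegM T) := ⟨.inl 1⟩

@[simp] theorem inl_mul_inl (s t : T) : (.inl s * .inl t : SegM T) = .inl (s * t) := rfl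
@[simp] theorem inl_mul_inr (s l : T) (M : List T) (r : T) :
    (.inl s * .inr (l, M, r) : SegM T) = .inr (s * l, M, r) := rfl
@[simp] theorem inr_mul_inl (l : T) (M : List T) (r t : T) :
    (.inr (l, M, r) * .inl t : SegM T) = .inr (l, M, r * t) := rfl
@[simp] theorem inr_mul_inr (l : T) (M : List T) (r l' : T) (M' : List T) (r' : T) :
    (.inr (l, M, r) * .inr (l', M', r') : SegM T) = .inr (l, M ++ (r * l') :: M', r') := rfl
@[simp] theorem one_def : (1 : SegM T) = .inl 1 := rfl

instance : Monoid (SegM T) where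
  mul_assoc x y z := by
    rcases x with s | ⟨l, M, r⟩ <;> rcases y with s' | ⟨l', M', r'⟩ <;>
      rcases z with s'' | ⟨l'', M'', r''⟩ <;>
      simp [mul_assoc, List.append_assoc] <;> rfl
  one_mul x := by rcases x with s | ⟨l, M, r⟩ <;> simp <;> rfl
  mul_one x := by rcases x with s | ⟨l, M, r⟩ <;> simp <;> rfl

end SegM

/-! ### The block monoid and the two homomorphisms -/

section Aux

variable {R A : Type u} (ρ : A → Set R) (hash : A)

/-- Non-hash letters. -/
abbrev BLet := {a : A // a ≠ hash}

/-- Resource map on non-hash letters. -/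
abbrev ρ' : BLet hash → Set R := fun a => ρ a.1

/-- Trace monoid on non-hash letters. -/
abbrev Blo : Type u := Trace (BLet hash) (ρ' ρ hash)

/-- Word-level hom back to the big trace monoid. -/
def f0 : FreeMonoid (BLet hash) →* Trace A ρ :=
  FreeMonoid.lift fun b => traceOf ρ b.1

lemma f0_cond : traceCon (BLet hash) (ρ' ρ hash) ≤ Con.ker (f0 ρ hash) := by
  apply Con.conGen_le.mpr
  rintro x y ⟨a, b, hab, rfl, rfl⟩
  rw [Con.ker_rel]
  simp only [map_mul, f0, FreeMonoid.lift_eval_of]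
  show traceMk ρ _ * traceMk ρ _ = traceMk ρ _ * traceMk ρ _
  rw [← map_mul, ← map_mul]
  exact (Con.eq _).mpr (ConGen.Rel.of _ _ ⟨a.1, b.1, hab, rfl, rfl⟩)

/-- Hom from the block monoid back to the big trace monoid. -/
def jHom : Blo ρ hash →* Trace A ρ :=
  Con.lift _ (f0 ρ hash) (f0_cond ρ hash)

@[simp] lemma jHom_of (b : BLet hash) :
    jHom ρ hash (traceOf (ρ' ρ hash) b) = traceOf ρ b.1 := by
  show Con.lift _ _ _ ((traceCon _ _).mk' (FreeMonoid.of b)) = _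
  rw [Con.lift_mk']
  simp [f0, traceOf]

/-- Word-level hom into the segmented monoid. -/
noncomputable def phi0 : FreeMonoid A →* SegM (Blo ρ hash) :=
  FreeMonoid.lift fun a =>
    if h : a = hash then .inr (1, [], 1) else .inl (traceOf (ρ' ρ hash) ⟨a, h⟩)

lemma phi0_cond (hhash : ρ hash = Set.univ) (hρ : ∀ a : A, ρ a ≠ ∅) :
    traceCon A ρ ≤ Con.ker (phi0 ρ hash) := by
  apply Con.conGen_le.mpr
  rintro x y ⟨a, b, hab, rfl, rfl⟩
  rw [Con.ker_rel]
  have ha : a ≠ hash := by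
    rintro rfl
    rw [hhash, Set.univ_inter] at hab
    exact hρ b hab
  have hb : b ≠ hash := by
    rintro rfl
    rw [hhash, Set.inter_univ] at hab
    exact hρ a hab
  rw [map_mul, map_mul]
  have e1 : phi0 ρ hash (FreeMonoid.of a) = .inl (traceOf (ρ' ρ hash) ⟨a, ha⟩) := by
    simp only [phi0, FreeMonoid.lift_eval_of]
    exact dif_neg ha
  have e2 : phi0 ρ hash (FreeMonoid.of b) = .inl (traceOf (ρ' ρ hash) ⟨b, hb⟩) := by
    simp only [phi0, FreeMonoid.lift_eval_of]
    exact dif_neg hb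
  rw [e1, e2, SegM.inl_mul_inl, SegM.inl_mul_inl]
  congr 1
  show traceMk _ _ * traceMk _ _ = traceMk _ _ * traceMk _ _
  rw [← map_mul, ← map_mul]
  exact (Con.eq _).mpr (ConGen.Rel.of _ _ ⟨⟨a, ha⟩, ⟨b, hb⟩, hab, rfl, rfl⟩)

/-- Hom from the trace monoid into the segmented monoid. -/
noncomputable def phiHom (hhash : ρ hash = Set.univ) (hρ : ∀ a : A, ρ a ≠ ∅) :
    Trace A ρ →* SegM (Blo ρ hash) :=
  Con.lift _ (phi0 ρ hash) (phi0_cond ρ hash hhash hρ)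

variable (hhash : ρ hash = Set.univ) (hρ : ∀ a : A, ρ a ≠ ∅)

@[simp] lemma phiHom_hash :
    phiHom ρ hash hhash hρ (traceOf ρ hash) = .inr (1, [], 1) := by
  show Con.lift _ _ _ ((traceCon _ _).mk' (FreeMonoid.of hash)) = _
  rw [Con.lift_mk']
  simp [phi0] <;> rfl

@[simp] lemma phiHom_of (b : BLet hash) :
    phiHom ρ hash hhash hρ (traceOf ρ b.1) = .inl (traceOf (ρ' ρ hash) b) := by
  show Con.lift _ _ _ ((traceCon _ _).mk' (FreeMonoid.of b.1)) = _
  rw [Con.lift_mk']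
  simp only [phi0, FreeMonoid.lift_eval_of, dif_neg b.2]
  exact dif_neg b.2

lemma key1 (x : Trace A ρ)
    (hx : x ∈ Submonoid.closure
      (Set.range fun a : {a : A // a ≠ hash} => traceOf ρ a.1)) :
    ∃ t : Blo ρ hash, phiHom ρ hash hhash hρ x = .inl t ∧ jHom ρ hash t = x := by
  induction hx using Submonoid.closure_induction with
  | mem x h =>
    obtain ⟨b, rfl⟩ := h
    exact ⟨traceOf (ρ' ρ hash) b, phiHom_of ρ hash hhash hρ b, jHom_of ρ hash b⟩
  | one => exact ⟨1, by simp <;> rfl, by simp⟩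
  | mul x y hx hy ihx ihy =>
    obtain ⟨s, hs1, hs2⟩ := ihx
    obtain ⟨t, ht1, ht2⟩ := ihy
    exact ⟨s * t, by simp [map_mul, hs1, ht1] <;> rfl, by simp [map_mul, hs2, ht2]⟩

lemma key2 : ∀ (m : ℕ) (u : Fin m → Trace A ρ) (t : Fin m → Blo ρ hash),
    (∀ i, phiHom ρ hash hhash hρ (u i) = .inl (t i)) →
    phiHom ρ hash hhash hρ
      (traceOf ρ hash * (List.ofFn fun i => u i * traceOf ρ hash).prod) =
      .inr (1, List.ofFn t, 1) := by
  intro m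
  induction m with
  | zero => intro u t _; simp <;> rfl
  | succ k ih =>
    intro u t ht
    rw [List.ofFn_succ, List.prod_cons, ← mul_assoc, ← mul_assoc,
      mul_assoc (traceOf ρ hash * u 0)]
    have := ih (fun i => u i.succ) (fun i => t i.succ) (fun i => ht i.succ)
    rw [map_mul, this, map_mul, phiHom_hash, ht 0]
    simp [List.ofFn_succ] <;> rfl

end Aux

/-- In a trace monoid `M(A,ρ)` with a marker letter `#` with `ρ(#) = 𝔯`
and `ρ(a) ≠ ∅` for all letters, if `u₁, …, u_m` and `v₁, …, v_n` are traces using only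
letters `≠ #` and `# u₁ # u₂ # ⋯ u_m # = # v₁ # v₂ # ⋯ v_n #`, then `m = n` and
`uᵢ = vᵢ` for all `i`. -/
theorem stmt_8 {R : Type u} [Fintype R] {A : Type u} [Fintype A]
    (ρ : A → Set R) (hash : A) (hhash : ρ hash = Set.univ)
    (hρ : ∀ a : A, ρ a ≠ ∅)
    (m n : ℕ) (u : Fin m → Trace A ρ) (v : Fin n → Trace A ρ)
    (hu : ∀ i, u i ∈
      Submonoid.closure (Set.range fun a : {a : A // a ≠ hash} => traceOf ρ a.1))
    (hv : ∀ j, v j ∈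
      Submonoid.closure (Set.range fun a : {a : A // a ≠ hash} => traceOf ρ a.1))
    (heq : traceOf ρ hash * (List.ofFn fun i => u i * traceOf ρ hash).prod =
           traceOf ρ hash * (List.ofFn fun j => v j * traceOf ρ hash).prod) :
    m = n ∧ ∀ (i : Fin m) (j : Fin n), (i : ℕ) = (j : ℕ) → u i = v j := by
  choose t ht hjt using fun i => key1 ρ hash hhash hρ (u i) (hu i)
  choose s hs hjs using fun j => key1 ρ hash hhash hρ (v j) (hv j)
  have h1 := key2 ρ hash hhash hρ m u t ht
  have h2 := key2 ρ hash hhash hρ n v s hs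
  rw [heq, h2] at h1
  have hlist : List.ofFn s = List.ofFn t := by
    injection h1 with h1
    exact (congrArg (fun p => p.2.1) h1)
  have hmn : m = n := by
    have := congrArg List.length hlist
    simpa using this.symm
  subst hmn
  refine ⟨rfl, fun i j hij => ?_⟩
  have hij' : i = j := Fin.ext hij
  subst hij'
  have : s = t := List.ofFn_inj.mp hlist
  rw [← hjt i, ← hjs i, this]
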